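/- (Multiplication by a Lipschitz cutoff preserves one-sided monotonicity, with a positive constant.) For all y, y' ∈ ℝ, one has (y − y')·(θ(y)F(y) − θ(y')F(y')) ≤ L·C·|y − y'|². -/

import Mathlib

/-- multiplication by a Lipschitz cutoff preserves one-sided
monotonicity, with a positive constant: under the stated assumptions on the
cutoff `θ` and the monotone generator `F`,
`(y − y')·(θ(y)F(y) − θ(y')F(y')) ≤ L·C·|y − y'|²`. -/
theorem cutoff_one_sided_lipschitz
    (r L C : ℝ) (hr : 0 ≤ r) (hL : 0 ≤ L) (hC : 0 ≤ C)
    (θ F : ℝ → ℝ)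
    (hθ0 : ∀ y, 0 ≤ θ y) (hθ1 : ∀ y, θ y ≤ 1)
    (hθLip : ∀ y y', |θ y - θ y'| ≤ L * |y - y'|)
    (hθsupp : ∀ y, r + 1 ≤ |y| → θ y = 0)
    (hFmono : ∀ y y', (y - y') * (F y - F y') ≤ 0)
    (hFbdd : ∀ y, |y| ≤ r + 1 → |F y| ≤ C) :
    ∀ y y', (y - y') * (θ y * F y - θ y' * F y') ≤ L * C * |y - y'| ^ 2 := by
  intro y y'
  -- cross term bound
  have cross : ∀ z : ℝ, |F z| ≤ C →
      (y - y') * ((θ y - θ y') * F z) ≤ L * C * |y - y'| ^ 2 := by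
    intro z hFz
    calc (y - y') * ((θ y - θ y') * F z)
        ≤ |(y - y') * ((θ y - θ y') * F z)| := le_abs_self _
      _ = |y - y'| * (|θ y - θ y'| * |F z|) := by rw [abs_mul, abs_mul]
      _ ≤ |y - y'| * ((L * |y - y'|) * C) := by
          apply mul_le_mul_of_nonneg_left _ (abs_nonneg _)
          exact mul_le_mul (hθLip y y') hFz (abs_nonneg _)
            (mul_nonneg hL (abs_nonneg _))
      _ = L * C * |y - y'| ^ 2 := by ring
  by_cases h1 : |y'| ≤ r + 1
  · have mono : (y - y') * (θ y * (F y - F y')) ≤ 0 := by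
      nlinarith [hFmono y y', hθ0 y]
    have := cross y' (hFbdd y' h1)
    nlinarith [mono]
  · by_cases h2 : |y| ≤ r + 1
    · have mono : (y - y') * (θ y' * (F y - F y')) ≤ 0 := by
        nlinarith [hFmono y y', hθ0 y']
      have := cross y (hFbdd y h2)
      nlinarith [mono]
    · have e1 : θ y = 0 := hθsupp y (le_of_not_ge h2)
      have e2 : θ y' = 0 := hθsupp y' (le_of_not_ge h1)
      rw [e1, e2]
      have : (0:ℝ) ≤ L * C * |y - y'| ^ 2 :=
        mul_nonneg (mul_nonneg hL hC) (sq_nonneg _)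
      simpa using this
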